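/- Let P be a continuous probability kernel on the finite alphabet A with inf_{a∈A, x∈A^{-ℕ}} P(a|x) ≥ δ > 0, and let X and Z be stationary chains compatible with P, with laws μ and ρ respectively. Define the cross conditional entropies H_X(Z_0 | Z_{−n}^{−1}) := − Σ_{a ∈ A^{n+1}} μ[a] log ρ(a_0 | a_{−n}^{−1}), where ρ(a_0 | a_{−n}^{−1}) = ρ[a_{−n}^{0}] / ρ[a_{−n}^{−1}]. Then lim_{n→∞} H_X(Z_0 | Z_{−n}^{−1}) exists and equals − E_μ[ log P(X_0 | X_{−1} X_{−2} …) ]; in particular the limit does not depend on the choice of the compatible chain Z. -/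

import Mathlib

open MeasureTheory ProbabilityTheory Filter ENNReal

namespace GT

/-- The set of pasts: `x i` represents the symbol `x_{-(i+1)}`. -/
abbrev Past (A : Type*) := ℕ → A

variable {A : Type*} [Fintype A] [MeasurableSpace A]

/-- The past of a bi-infinite trajectory: `past ω i = ω (-(i+1))`. -/
def past (ω : ℤ → A) : Past A := fun i => ω (-((i : ℤ) + 1))

/-- The left shift on bi-infinite sequences. -/
def shift (ω : ℤ → A) : ℤ → A := fun n => ω (n + 1)

/-- Shift invariance (stationarity) of a measure on `A^ℤ`. -/
def ShiftInvariant (μ : Measure (ℤ → A)) : Prop := μ.map shift = μ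

/-- `P` is a (measurable) probability kernel on the alphabet `A`. -/
def IsProbKernel (P : A → Past A → ℝ) : Prop :=
  (∀ a, Measurable (P a)) ∧ (∀ a x, 0 ≤ P a x) ∧ ∀ x, ∑ a, P a x = 1

/-- `μ` is compatible with the kernel `P`: `P` is a regular version of the
conditional probabilities of `μ` given the past. -/
def Compatible (P : A → Past A → ℝ) (μ : Measure (ℤ → A)) : Prop :=
  ∀ (a : A) (B : Set (Past A)), MeasurableSet B →
    (μ {ω | ω 0 = a ∧ past ω ∈ B}).toReal = ∫ ω in past ⁻¹' B, P a (past ω) ∂μ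

/-- A stationary chain compatible with `P`. -/
def StatChain (P : A → Past A → ℝ) (μ : Measure (ℤ → A)) : Prop :=
  IsProbabilityMeasure μ ∧ ShiftInvariant μ ∧ Compatible P μ

/-- The continuity rate (variation) of order `k` of the kernel `P`. -/
noncomputable def varRate (P : A → Past A → ℝ) (k : ℕ) : ℝ :=
  sSup {d | ∃ (b : A) (x y : Past A), (∀ i < k, x i = y i) ∧ d = |P b x - P b y|}

/-- A kernel is continuous if its continuity rate tends to `0`. -/
def ContinuousKernel (P : A → Past A → ℝ) : Prop :=
  Tendsto (varRate P) atTop (nhds 0)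

/-- Strong non-nullness of a kernel. -/
def StronglyNonNull (P : A → Past A → ℝ) : Prop := ∃ δ > 0, ∀ a x, δ ≤ P a x

/-- A regular kernel: continuous and strongly non-null. -/
def RegularKernel (P : A → Past A → ℝ) : Prop := ContinuousKernel P ∧ StronglyNonNull P

/-- Attractiveness: for every `a`, `x ↦ ∑_{b ≥ a} P(b|x)` is nondecreasing for the
coordinatewise partial order on pasts. -/
def Attractive [LinearOrder A] (P : A → Past A → ℝ) : Prop :=
  ∀ a : A, Monotone fun x : Past A => ∑ b ∈ Finset.univ.filter (fun b => a ≤ b), P b x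

/-- The word `(X_1, …, X_n)` read off from a trajectory `ω`. -/
def word (n : ℕ) (ω : ℤ → A) : Fin n → A := fun j => ω (((j : ℕ) : ℤ) + 1)

/-- `δ_j f`: the oscillation of `f` along the `j`-th coordinate. -/
noncomputable def deltaj {n : ℕ} (f : (Fin n → A) → ℝ) (j : Fin n) : ℝ :=
  sSup {d | ∃ a b : Fin n → A, (∀ i, i ≠ j → a i = b i) ∧ d = |f a - f b|}

/-- `‖δf‖_{ℓ1}`. -/
noncomputable def delta1 {n : ℕ} (f : (Fin n → A) → ℝ) : ℝ := ∑ j, deltaj f j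

/-- `‖δf‖_{ℓ2}²`. -/
noncomputable def delta2sq {n : ℕ} (f : (Fin n → A) → ℝ) : ℝ := ∑ j, (deltaj f j) ^ 2

/-- Concentration of measure at exponential rate for the stationary law `μ`. -/
def ConcExpRate (μ : Measure (ℤ → A)) : Prop :=
  ∃ (C : ℝ) (g : ℝ → ℝ → ℝ), (∀ ε t, 0 < ε → 0 < t → 0 < g ε t) ∧
    ∀ (n : ℕ), 1 ≤ n → ∀ (f : (Fin n → A) → ℝ) (ε : ℝ), 0 < ε →
      (μ {ω | ε < |f (word n ω) - ∫ ω', f (word n ω') ∂μ|}).toReal ≤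
        C * Real.exp (-(g ε (delta1 f)) / delta2sq f)

/-- `ℙ` is the law of an i.i.d. process indexed by `ℤ`. -/
def IsIID {U : Type*} [MeasurableSpace U] (P : Measure (ℤ → U)) : Prop :=
  IsProbabilityMeasure P ∧
  iIndepFun (fun i (u : ℤ → U) => u i) P ∧
  ∀ i : ℤ, P.map (fun u => u i) = P.map (fun u => u 0)

/-- A finitary coding of the process with law `ℙ` onto the process with law `μ`:
a shift-equivariant measurable factor map together with a.s. finite stopping
times `θ₁` (into the past) and `θ₂` (into the future) such that the zeroth output
symbol only depends on the coordinates in the window `[-θ₁, θ₂]`. -/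
structure FinitaryCoding {U : Type*} [MeasurableSpace U]
    (μ : Measure (ℤ → A)) (P : Measure (ℤ → U)) where
  Φ : (ℤ → U) → ℤ → A
  meas : Measurable Φ
  equivariant : ∀ (u : ℤ → U) (n : ℤ), Φ (fun m => u (m + 1)) n = Φ u (n + 1)
  map_eq : P.map Φ = μ
  θ₁ : (ℤ → U) → ℕ∞
  θ₂ : (ℤ → U) → ℕ∞
  meas_theta : ∀ k l : ℕ∞, MeasurableSet {u | θ₁ u = k ∧ θ₂ u = l}
  finite_ae : P {u | θ₁ u = ⊤ ∨ θ₂ u = ⊤} = 0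
  window : ∀ (k l : ℕ) (u v : ℤ → U),
      (∀ j : ℤ, -(k : ℤ) ≤ j → j ≤ (l : ℤ) → u j = v j) →
      θ₁ u = (k : ℕ∞) → θ₂ u = (l : ℕ∞) → θ₁ v = (k : ℕ∞) ∧ θ₂ v = (l : ℕ∞)
  localize : ∀ u v : ℤ → U,
      (∀ j : ℤ, ((j.natAbs : ℕ∞) ≤ if j < 0 then θ₁ u else θ₂ u) → u j = v j) →
      Φ u 0 = Φ v 0

/-- The new past obtained by appending the freshly generated symbol `a`. -/
def consPast (a : A) (x : Past A) : Past A := fun i =>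
  match i with
  | 0 => a
  | j + 1 => x j

/-- The probability that the fixed-past chain with past `x` produces the word `w`
(first element of `w` generated first). -/
noncomputable def wordProb (P : A → Past A → ℝ) : Past A → List A → ℝ
  | _, [] => 1
  | x, a :: w => P a x * wordProb P (consPast a x) w

/-- `ℙ(X_{j+1}^x … X_{j+|w|}^x = w)`: the law of the fixed-past chain shifted by `j`. -/
noncomputable def shiftedCylProb (P : A → Past A → ℝ) (x : Past A) (j : ℕ) (w : List A) : ℝ :=
  ∑ u : Fin j → A, wordProb P x (List.ofFn u ++ w)

/-- The cylinder set `{ω : ω_1 … ω_n = w}` (coordinates `1, …, |w|`). -/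
def cylFrom1 (w : List A) : Set (ℤ → A) :=
  {ω | ∀ i : Fin w.length, ω (((i : ℕ) : ℤ) + 1) = w.get i}


variable {A : Type*} [Fintype A] [MeasurableSpace A]

/-- The cylinder set `{ω : ω_0 … ω_{n-1} = w}`. -/
def cyl (n : ℕ) (w : Fin n → A) : Set (ℤ → A) := {ω | ∀ i : Fin n, ω ((i : ℕ) : ℤ) = w i}

/-- The cross conditional entropy `H_X(Z_0 | Z_{-n}^{-1})`, where `X` has law `μ`,
`Z` has law `ρ`, and a word `w : Fin (n+1) → A` represents `(a_{-n}, …, a_0)` (the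
last coordinate of `w` is `a_0`); `ρ(a_0 | a_{-n}^{-1}) = ρ[a_{-n}^0] / ρ[a_{-n}^{-1}]`. -/
noncomputable def crossEntropy (μ ρ : Measure (ℤ → A)) (n : ℕ) : ℝ :=
  -∑ w : Fin (n + 1) → A,
    (μ (cyl (n + 1) w)).toReal *
      Real.log ((ρ (cyl (n + 1) w)).toReal / (ρ (cyl n (Fin.init w))).toReal)

set_option linter.unusedSectionVars false
section Aux1

variable {A : Type*} [Fintype A] [MeasurableSpace A]

lemma measurable_past : Measurable (past (A := A)) :=
  measurable_pi_lambda _ fun _ => measurable_pi_apply _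

lemma measurable_shift : Measurable (shift (A := A)) :=
  measurable_pi_lambda _ fun _ => measurable_pi_apply _

/-- `n`-fold shift. -/
def Sn (n : ℕ) : (ℤ → A) → (ℤ → A) := fun ω i => ω (i + n)

lemma measurable_Sn (n : ℕ) : Measurable (Sn (A := A) n) :=
  measurable_pi_lambda _ fun _ => measurable_pi_apply _

lemma Sn_succ (n : ℕ) : Sn (A := A) (n + 1) = Sn n ∘ shift := by
  funext ω i
  show ω (i + ((n : ℕ) + 1 : ℕ)) = ω (i + n + 1)
  congr 1
  push_cast
  ring

lemma measure_Sn (μ : Measure (ℤ → A)) (hinv : ShiftInvariant μ) (n : ℕ)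
    {S : Set (ℤ → A)} (hS : MeasurableSet S) : μ (Sn n ⁻¹' S) = μ S := by
  induction n with
  | zero =>
      have : Sn (A := A) 0 ⁻¹' S = S := by
        have : Sn (A := A) 0 = id := by funext ω i; show ω (i + (0:ℕ)) = ω i; norm_num
        rw [this]; rfl
      rw [this]
  | succ n ih =>
      have h1 : Sn (A := A) (n+1) ⁻¹' S = shift ⁻¹' (Sn n ⁻¹' S) := by
        rw [Sn_succ]; rfl
      have hm : MeasurableSet (Sn (A := A) n ⁻¹' S) := measurable_Sn n hS
      rw [h1, ← Measure.map_apply measurable_shift hm, hinv, ih]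

/-- Cylinder on coordinates `-n, …, -1`. -/
def Cm (n : ℕ) (v : Fin n → A) : Set (ℤ → A) := {ω | ∀ i : Fin n, ω ((i : ℤ) - n) = v i}

/-- Cylinder on coordinates `-n, …, 0`. -/
def Dm (n : ℕ) (w : Fin (n+1) → A) : Set (ℤ → A) :=
  {ω | ∀ i : Fin (n+1), ω ((i : ℤ) - n) = w i}

/-- The set of pasts matching the first `n` symbols of `w` (read backwards). -/
def Bp (n : ℕ) (w : Fin (n+1) → A) : Set (Past A) :=
  {x | ∀ j : Fin n, x j = w ⟨n - 1 - (j : ℕ), by omega⟩}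

lemma Sn_preimage_Cm (n : ℕ) (v : Fin n → A) : Sn (A := A) n ⁻¹' Cm n v = cyl n v := by
  ext ω
  constructor
  · intro h i
    have h2 : ω ((i : ℤ) - n + n) = v i := h i
    show ω ((i : ℕ) : ℤ) = v i
    have e : (i : ℤ) - n + n = ((i : ℕ) : ℤ) := by ring
    rwa [e] at h2
  · intro h i
    show ω ((i : ℤ) - n + n) = v i
    have e : (i : ℤ) - n + n = ((i : ℕ) : ℤ) := by ring
    rw [e]
    exact h i

lemma Sn_preimage_Dm (n : ℕ) (w : Fin (n+1) → A) :
    Sn (A := A) n ⁻¹' Dm n w = cyl (n+1) w := by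
  ext ω
  constructor
  · intro h i
    have h2 : ω ((i : ℤ) - n + n) = w i := h i
    show ω ((i : ℕ) : ℤ) = w i
    have e : (i : ℤ) - n + n = ((i : ℕ) : ℤ) := by ring
    rwa [e] at h2
  · intro h i
    show ω ((i : ℤ) - n + n) = w i
    have e : (i : ℤ) - n + n = ((i : ℕ) : ℤ) := by ring
    rw [e]
    exact h i

lemma Dm_eq (n : ℕ) (w : Fin (n+1) → A) :
    Dm n w = {ω | ω 0 = w (Fin.last n) ∧ past ω ∈ Bp n w} := by
  ext ω
  constructor
  · intro h
    refine ⟨?_, ?_⟩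
    · have := h (Fin.last n)
      simpa [Fin.last] using this
    · intro j
      have hj : (j : ℕ) < n := j.isLt
      have := h ⟨n - 1 - (j : ℕ), by omega⟩
      show ω (-((j : ℤ) + 1)) = _
      have harg : ((⟨n - 1 - (j : ℕ), by omega⟩ : Fin (n+1)) : ℤ) - n = -((j : ℤ) + 1) := by
        show ((n - 1 - (j : ℕ) : ℕ) : ℤ) - n = -((j : ℤ) + 1)
        omega
      rwa [harg] at this
  · rintro ⟨h0, hp⟩ i
    by_cases hi : (i : ℕ) = n
    · have : i = Fin.last n := by ext; simpa using hi
      subst this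
      simpa [Fin.last] using h0
    · have hi' : (i : ℕ) < n := by omega
      have := hp ⟨n - 1 - (i : ℕ), by omega⟩
      have hidx : (⟨n - 1 - (n - 1 - (i : ℕ)), by omega⟩ : Fin (n+1)) = i := by
        ext; show n - 1 - (n - 1 - (i : ℕ)) = (i : ℕ); omega
      rw [hidx] at this
      have harg : -(((⟨n - 1 - (i : ℕ), by omega⟩ : Fin n) : ℤ) + 1) = (i : ℤ) - n := by
        show -(((n - 1 - (i : ℕ) : ℕ) : ℤ) + 1) = (i : ℤ) - n
        omega
      show ω ((i : ℤ) - n) = w i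
      rw [← harg]
      exact this

lemma past_preimage_Bp (n : ℕ) (w : Fin (n+1) → A) :
    past ⁻¹' (Bp n w) = Cm n (Fin.init w) := by
  ext ω
  constructor
  · intro h i
    have hi : (i : ℕ) < n := i.isLt
    have := h ⟨n - 1 - (i : ℕ), by omega⟩
    have hidx : (⟨n - 1 - (n - 1 - (i : ℕ)), by omega⟩ : Fin (n+1)) = Fin.castSucc i := by
      ext; show n - 1 - (n - 1 - (i : ℕ)) = (i : ℕ); omega
    rw [hidx] at this
    have harg : -(((⟨n - 1 - (i : ℕ), by omega⟩ : Fin n) : ℤ) + 1) = (i : ℤ) - n := by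
      show -(((n - 1 - (i : ℕ) : ℕ) : ℤ) + 1) = (i : ℤ) - n
      omega
    show ω ((i : ℤ) - n) = Fin.init w i
    rw [← harg]
    exact this
  · intro h j
    have hj : (j : ℕ) < n := j.isLt
    have := h ⟨n - 1 - (j : ℕ), by omega⟩
    have harg : ((⟨n - 1 - (j : ℕ), by omega⟩ : Fin n) : ℤ) - n = -((j : ℤ) + 1) := by
      show ((n - 1 - (j : ℕ) : ℕ) : ℤ) - n = -((j : ℤ) + 1)
      omega
    have h3 : past ω j = Fin.init w ⟨n - 1 - (j : ℕ), by omega⟩ :=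
      (congrArg ω harg).symm.trans this
    rw [h3]
    exact congrArg w (Fin.val_injective rfl)

end Aux1
lemma invariant_preimage {ι : Type*} {β : ι → Type*} [∀ i, MeasurableSpace (β i)]
    (φ : (∀ i, β i) → (∀ i, β i))
    (hcoord : ∀ (i : ι) (M : Set (β i)), MeasurableSet M →
      φ ⁻¹' ((fun ω => ω i) ⁻¹' M) = (fun ω => ω i) ⁻¹' M) :
    ∀ H : Set (∀ i, β i), MeasurableSet H → φ ⁻¹' H = H := by
  have hle : (MeasurableSpace.pi : MeasurableSpace (∀ i, β i)) ≤
      { MeasurableSet' := fun H => MeasurableSet H ∧ φ ⁻¹' H = H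
        measurableSet_empty := ⟨MeasurableSet.empty, by simp⟩
        measurableSet_compl := fun H h => ⟨h.1.compl, by rw [Set.preimage_compl, h.2]⟩
        measurableSet_iUnion := fun f hf =>
          ⟨MeasurableSet.iUnion fun i => (hf i).1, by
            rw [Set.preimage_iUnion]
            exact Set.iUnion_congr fun i => (hf i).2⟩ } := by
    refine iSup_le fun j => ?_
    intro S hS
    obtain ⟨M, hM, rfl⟩ := hS
    exact ⟨measurable_pi_apply j hM, hcoord j M hM⟩
  exact fun H h => (hle H h).2

section Aux2

variable {A : Type*} [Fintype A] [MeasurableSpace A]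

lemma nonempty_of_prob (μ : Measure (ℤ → A)) [IsProbabilityMeasure μ] : Nonempty A := by
  by_contra h
  rw [not_nonempty_iff] at h
  haveI : IsEmpty (ℤ → A) := ⟨fun f => h.false (f 0)⟩
  have h1 : μ Set.univ = 1 := measure_univ
  rw [Set.univ_eq_empty_iff.mpr inferInstance] at h1
  simp at h1

lemma P_le_one {P : A → Past A → ℝ} (hker : IsProbKernel P) (a : A) (x : Past A) :
    P a x ≤ 1 := by
  calc P a x ≤ ∑ b, P b x :=
        Finset.single_le_sum (fun b _ => hker.2.1 b x) (Finset.mem_univ a)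
  _ = 1 := hker.2.2 x

lemma integrable_P_past {P : A → Past A → ℝ} (hker : IsProbKernel P)
    (μ : Measure (ℤ → A)) [IsProbabilityMeasure μ] (a : A) :
    Integrable (fun ω => P a (past ω)) μ := by
  refine (integrable_const (1:ℝ)).mono'
    ((hker.1 a).comp measurable_past).aestronglyMeasurable ?_
  filter_upwards with ω
  rw [Real.norm_eq_abs, abs_of_nonneg (hker.2.1 _ _)]
  exact P_le_one hker a _

lemma compat_univ {P : A → Past A → ℝ} {μ : Measure (ℤ → A)} (hc : Compatible P μ) (a : A) :
    (μ {ω | ω 0 = a}).toReal = ∫ ω, P a (past ω) ∂μ := by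
  have h := hc a Set.univ MeasurableSet.univ
  simpa using h

lemma all_measurable {P : A → Past A → ℝ} (hker : IsProbKernel P) {δ : ℝ} (hδ : 0 < δ)
    (hbound : ∀ a x, δ ≤ P a x) (μ : Measure (ℤ → A)) (hμ : StatChain P μ) :
    ∀ s : Set A, MeasurableSet s := by
  classical
  haveI : IsProbabilityMeasure μ := hμ.1
  set p : A → ℝ := fun a => ∫ ω, P a (past ω) ∂μ with hp
  have hpq : ∀ a, (μ {ω | ω 0 = a}).toReal = p a := fun a => compat_univ hμ.2.2 a
  have hpδ : ∀ a, δ ≤ p a := by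
    intro a
    have := integral_mono (integrable_const δ) (integrable_P_past hker μ a)
      (fun ω => hbound a (past ω))
    simpa using this
  have hpsum : ∑ a, p a = 1 := by
    rw [hp, ← integral_finset_sum _ (fun a _ => integrable_P_past hker μ a)]
    simp [hker.2.2]
  -- separation of points
  have hsep : ∀ a b : A, a ≠ b → ∃ M : Set A, MeasurableSet M ∧ a ∈ M ∧ b ∉ M := by
    intro a b hab
    by_contra hn
    push_neg at hn
    have hMiff : ∀ M : Set A, MeasurableSet M → (a ∈ M ↔ b ∈ M) := by
      intro M hM
      constructor
      · exact hn M hM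
      · intro hb
        by_contra ha
        exact (hn Mᶜ hM.compl ha) hb
    have hswap : ∀ M : Set A, MeasurableSet M → Equiv.swap a b ⁻¹' M = M := by
      intro M hM
      ext x
      simp only [Set.mem_preimage]
      rcases eq_or_ne x a with rfl | hxa
      · rw [Equiv.swap_apply_left]
        exact (hMiff M hM).symm
      rcases eq_or_ne x b with rfl | hxb
      · rw [Equiv.swap_apply_right]
        exact hMiff M hM
      · rw [Equiv.swap_apply_of_ne_of_ne hxa hxb]
    set s₀ : (ℤ → A) → (ℤ → A) := fun ω j => if j = 0 then Equiv.swap a b (ω j) else ω j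
      with hs₀
    have hH : ∀ H : Set (ℤ → A), MeasurableSet H → s₀ ⁻¹' H = H := by
      refine invariant_preimage s₀ fun j M hM => ?_
      ext ω
      simp only [Set.mem_preimage]
      show (if j = 0 then Equiv.swap a b (ω j) else ω j) ∈ M ↔ ω j ∈ M
      split_ifs with hj
      · rw [← Set.mem_preimage, hswap M hM]
      · rfl
    set D : A → Set (ℤ → A) := fun c => {ω | ω 0 = c} with hD
    set T : A → Set (ℤ → A) := fun c => toMeasurable μ (D c) with hT
    have hDT : ∀ c, D c ⊆ T c := fun c => subset_toMeasurable μ (D c)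
    have hTmeas : ∀ c, MeasurableSet (T c) := fun c => measurableSet_toMeasurable μ (D c)
    have hμT : ∀ c, (μ (T c)).toReal = p c := by
      intro c
      show (μ (toMeasurable μ (D c))).toReal = p c
      rw [measure_toMeasurable]
      exact hpq c
    have hDbTa : D b ⊆ T a := by
      intro ω hω
      have h1 : s₀ ω ∈ D a := by
        show s₀ ω 0 = a
        have : s₀ ω 0 = Equiv.swap a b (ω 0) := by simp [hs₀]
        rw [this, hω, Equiv.swap_apply_right]
      have h2 : s₀ ω ∈ T a := hDT a h1
      have := hH (T a) (hTmeas a)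
      rw [← this]
      exact h2
    -- the complement of `T a` misses `D a` and `D b`
    set E : Finset A := (Finset.univ.erase a).erase b with hE
    have hcompl : (T a)ᶜ ⊆ ⋃ c ∈ E, T c := by
      intro ω hω
      have h0 : ω ∈ D (ω 0) := rfl
      have hca : ω 0 ≠ a := fun h => hω (hDT a h)
      have hcb : ω 0 ≠ b := fun h => hω (hDbTa h)
      have hmem : ω 0 ∈ E := by
        rw [hE]
        exact Finset.mem_erase.mpr ⟨hcb, Finset.mem_erase.mpr ⟨hca, Finset.mem_univ _⟩⟩
      exact Set.mem_biUnion hmem (hDT (ω 0) h0)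
    have hsumE : ∑ c ∈ E, p c = 1 - p a - p b := by
      have h1 : ∑ c ∈ Finset.univ.erase a, p c = 1 - p a := by
        have := Finset.add_sum_erase Finset.univ p (Finset.mem_univ a)
        linarith [hpsum, this]
      have h2 : ∑ c ∈ E, p c = (∑ c ∈ Finset.univ.erase a, p c) - p b := by
        have hbmem : b ∈ Finset.univ.erase a := Finset.mem_erase.mpr ⟨Ne.symm hab, Finset.mem_univ _⟩
        have := Finset.add_sum_erase (Finset.univ.erase a) p hbmem
        rw [hE]
        linarith [this]
      rw [h2, h1]
    have hleE : (μ (T a)ᶜ).toReal ≤ ∑ c ∈ E, p c := by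
      have h1 : μ ((T a)ᶜ) ≤ ∑ c ∈ E, μ (T c) :=
        le_trans (measure_mono hcompl) (measure_biUnion_finset_le E T)
      have h2 : (∑ c ∈ E, μ (T c)).toReal = ∑ c ∈ E, p c := by
        rw [ENNReal.toReal_sum (fun c _ => measure_ne_top μ (T c))]
        exact Finset.sum_congr rfl fun c _ => hμT c
      rw [← h2]
      exact ENNReal.toReal_mono (by
        refine (ENNReal.sum_lt_top.mpr fun c _ => (measure_lt_top μ (T c))).ne) h1
    have hadd : (μ (T a)).toReal + (μ (T a)ᶜ).toReal = 1 := by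
      have := measure_add_measure_compl (μ := μ) (hTmeas a)
      have h2 := congrArg ENNReal.toReal this
      rw [ENNReal.toReal_add (measure_ne_top _ _) (measure_ne_top _ _)] at h2
      simpa using h2
    have h1 : (μ (T a)ᶜ).toReal ≤ 1 - p a - p b := by rw [← hsumE]; exact hleE
    have h2 : (μ (T a)).toReal = p a := hμT a
    linarith [hpδ b, hδ, hadd, h1, h2]
  -- singletons are measurable
  choose M hM1 hM2 hM3 using hsep
  haveI : MeasurableSingletonClass A := by
    refine ⟨fun a => ?_⟩
    have : {a} = ⋂ (b : A), ⋂ (h : a ≠ b), M a b h := by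
      ext x
      simp only [Set.mem_singleton_iff, Set.mem_iInter]
      constructor
      · rintro rfl b h
        exact hM2 x b h
      · intro h
        by_contra hx
        exact hM3 a x (Ne.symm hx) (h x (Ne.symm hx))
    rw [this]
    exact MeasurableSet.iInter fun b => MeasurableSet.iInter fun h => hM1 a b h
  intro s
  exact s.to_countable.measurableSet

end Aux2
section Aux3

variable {A : Type*} [Fintype A] [MeasurableSpace A]

lemma meas_cyl (hA : ∀ s : Set A, MeasurableSet s) (n : ℕ) (w : Fin n → A) :
    MeasurableSet (cyl n w) := by
  have h : cyl n w = ⋂ i : Fin n, (fun ω : ℤ → A => ω ((i : ℕ) : ℤ)) ⁻¹' {w i} := by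
    ext ω; simp [cyl, Set.mem_iInter]
  rw [h]
  exact MeasurableSet.iInter fun i => measurable_pi_apply _ (hA {w i})

lemma meas_Cm (hA : ∀ s : Set A, MeasurableSet s) (n : ℕ) (v : Fin n → A) :
    MeasurableSet (Cm n v) := by
  have h : Cm n v = ⋂ i : Fin n, (fun ω : ℤ → A => ω ((i : ℤ) - n)) ⁻¹' {v i} := by
    ext ω; simp [Cm, Set.mem_iInter]
  rw [h]
  exact MeasurableSet.iInter fun i => measurable_pi_apply _ (hA {v i})

lemma meas_Dm (hA : ∀ s : Set A, MeasurableSet s) (n : ℕ) (w : Fin (n+1) → A) :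
    MeasurableSet (Dm n w) := by
  have h : Dm n w = ⋂ i : Fin (n+1), (fun ω : ℤ → A => ω ((i : ℤ) - n)) ⁻¹' {w i} := by
    ext ω; simp [Dm, Set.mem_iInter]
  rw [h]
  exact MeasurableSet.iInter fun i => measurable_pi_apply _ (hA {w i})

lemma meas_Bp (hA : ∀ s : Set A, MeasurableSet s) (n : ℕ) (w : Fin (n+1) → A) :
    MeasurableSet (Bp n w) := by
  have h : Bp n w = ⋂ j : Fin n,
      (fun x : Past A => x j) ⁻¹' {w ⟨n - 1 - (j : ℕ), by omega⟩} := by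
    ext x; simp [Bp, Set.mem_iInter]
  rw [h]
  exact MeasurableSet.iInter fun j => measurable_pi_apply _ (hA _)

lemma abs_sub_le_varRate {P : A → Past A → ℝ} (hker : IsProbKernel P) (k : ℕ) (b : A)
    (x y : Past A) (hxy : ∀ i < k, x i = y i) : |P b x - P b y| ≤ varRate P k := by
  apply le_csSup
  · refine ⟨1, ?_⟩
    rintro d ⟨c, u, v, -, rfl⟩
    rw [abs_sub_le_iff]
    constructor
    · linarith [P_le_one hker c u, hker.2.1 c v]
    · linarith [P_le_one hker c v, hker.2.1 c u]
  · exact ⟨b, x, y, hxy, rfl⟩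

lemma varRate_nonneg [Nonempty A] {P : A → Past A → ℝ} (hker : IsProbKernel P) (k : ℕ) :
    0 ≤ varRate P k := by
  have x : Past A := fun _ => Classical.arbitrary A
  have h := abs_sub_le_varRate hker k (Classical.arbitrary A) x x (fun _ _ => rfl)
  simpa using h

lemma log_sub_log_le {δ u v : ℝ} (hδ : 0 < δ) (hu : δ ≤ u) (hv : δ ≤ v) :
    Real.log u - Real.log v ≤ |u - v| / δ := by
  have hu0 : 0 < u := lt_of_lt_of_le hδ hu
  have hv0 : 0 < v := lt_of_lt_of_le hδ hv
  rw [← Real.log_div hu0.ne' hv0.ne']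
  have h2 : Real.log (u/v) ≤ u/v - 1 := Real.log_le_sub_one_of_pos (div_pos hu0 hv0)
  have h3 : u/v - 1 = (u - v)/v := by field_simp
  calc Real.log (u/v) ≤ (u - v)/v := by rw [← h3]; exact h2
  _ ≤ |u - v|/v := (div_le_div_iff_of_pos_right hv0).mpr (le_abs_self _)
  _ ≤ |u - v|/δ := by
        rw [div_le_div_iff₀ hv0 hδ]
        nlinarith [abs_nonneg (u - v)]

lemma abs_log_sub_log_le {δ u v : ℝ} (hδ : 0 < δ) (hu : δ ≤ u) (hv : δ ≤ v) :
    |Real.log u - Real.log v| ≤ |u - v| / δ := by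
  rw [abs_sub_le_iff]
  exact ⟨log_sub_log_le hδ hu hv, by rw [abs_sub_comm]; exact log_sub_log_le hδ hv hu⟩

lemma abs_log_le {δ t : ℝ} (hδ : 0 < δ) (ht : δ ≤ t) (ht1 : t ≤ 1) :
    |Real.log t| ≤ |Real.log δ| := by
  have h1 : Real.log t ≤ 0 := Real.log_nonpos (by linarith) ht1
  have h2 : Real.log δ ≤ Real.log t := Real.log_le_log hδ ht
  rw [abs_of_nonpos h1, abs_of_nonpos (by linarith)]
  linarith

/-- Canonical past extending the first `n` symbols of the word `w`. -/
def xw (a₀ : A) (n : ℕ) (w : Fin (n+1) → A) : Past A := fun j =>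
  if h : j < n then w ⟨n - 1 - j, by omega⟩ else a₀

lemma xw_agree (a₀ : A) (n : ℕ) (w : Fin (n+1) → A) {x : Past A} (hx : x ∈ Bp n w) :
    ∀ i < n, x i = xw a₀ n w i := by
  intro i hi
  have h1 := hx ⟨i, hi⟩
  rw [xw, dif_pos hi]
  exact h1

lemma xw_mem (a₀ : A) (n : ℕ) (w : Fin (n+1) → A) : xw a₀ n w ∈ Bp n w := by
  intro j
  rw [xw, dif_pos j.isLt]

end Aux3
section Aux4

variable {A : Type*} [Fintype A] [MeasurableSpace A]
variable {P : A → Past A → ℝ} {ν : Measure (ℤ → A)}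

lemma measure_cyl_eq_Dm (hA : ∀ s : Set A, MeasurableSet s) (hinv : ShiftInvariant ν)
    (n : ℕ) (w : Fin (n+1) → A) : ν (cyl (n+1) w) = ν (Dm n w) := by
  rw [← Sn_preimage_Dm n w]
  exact measure_Sn ν hinv n (meas_Dm hA n w)

lemma measure_cyl_eq_Cm (hA : ∀ s : Set A, MeasurableSet s) (hinv : ShiftInvariant ν)
    (n : ℕ) (v : Fin n → A) : ν (cyl n v) = ν (Cm n v) := by
  rw [← Sn_preimage_Cm n v]
  exact measure_Sn ν hinv n (meas_Cm hA n v)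

lemma compat_Dm (hA : ∀ s : Set A, MeasurableSet s) (hc : Compatible P ν)
    (n : ℕ) (w : Fin (n+1) → A) :
    (ν (Dm n w)).toReal = ∫ ω in Cm n (Fin.init w), P (w (Fin.last n)) (past ω) ∂ν := by
  have h := hc (w (Fin.last n)) (Bp n w) (meas_Bp hA n w)
  rw [past_preimage_Bp] at h
  rw [Dm_eq]
  exact h

lemma cyl_pos (hA : ∀ s : Set A, MeasurableSet s) (hker : IsProbKernel P) {δ : ℝ}
    (hδ : 0 < δ) (hbound : ∀ a x, δ ≤ P a x) (hν : StatChain P ν) (n : ℕ) (v : Fin n → A) :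
    δ ^ n ≤ (ν (cyl n v)).toReal := by
  haveI : IsProbabilityMeasure ν := hν.1
  induction n with
  | zero =>
      have h : cyl 0 v = Set.univ := by
        ext ω; simp [cyl]
      rw [h]
      simp
  | succ n ih =>
      have hq := ih (Fin.init v)
      have h1 : (ν (cyl (n+1) v)).toReal
          = ∫ ω in Cm n (Fin.init v), P (v (Fin.last n)) (past ω) ∂ν := by
        rw [measure_cyl_eq_Dm hA hν.2.1, compat_Dm hA hν.2.2]
      have hmeasCm := meas_Cm hA n (Fin.init v)
      have hint : IntegrableOn (fun ω => P (v (Fin.last n)) (past ω)) (Cm n (Fin.init v)) ν :=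
        (integrable_P_past hker ν _).integrableOn
      have h2 : ∫ _ω in Cm n (Fin.init v), δ ∂ν
          ≤ ∫ ω in Cm n (Fin.init v), P (v (Fin.last n)) (past ω) ∂ν :=
        setIntegral_mono_on (integrable_const δ).integrableOn hint hmeasCm
          (fun ω _ => hbound _ _)
      have h3 : ∫ _ω in Cm n (Fin.init v), δ ∂ν = (ν (Cm n (Fin.init v))).toReal * δ := by
        rw [setIntegral_const]; rw [smul_eq_mul]; rfl
      have h4 : (ν (Cm n (Fin.init v))).toReal = (ν (cyl n (Fin.init v))).toReal := by
        rw [← measure_cyl_eq_Cm hA hν.2.1]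
      calc δ^(n+1) = δ^n * δ := by ring
      _ ≤ (ν (cyl n (Fin.init v))).toReal * δ := mul_le_mul_of_nonneg_right hq hδ.le
      _ = ∫ _ω in Cm n (Fin.init v), δ ∂ν := by rw [h3, h4]
      _ ≤ ∫ ω in Cm n (Fin.init v), P (v (Fin.last n)) (past ω) ∂ν := h2
      _ = (ν (cyl (n+1) v)).toReal := h1.symm

lemma key_ratio (hA : ∀ s : Set A, MeasurableSet s) (hker : IsProbKernel P) {δ : ℝ}
    (hδ : 0 < δ) (hbound : ∀ a x, δ ≤ P a x) (hν : StatChain P ν)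
    (a₀ : A) (n : ℕ) (w : Fin (n+1) → A) :
    |Real.log ((ν (cyl (n+1) w)).toReal / (ν (cyl n (Fin.init w))).toReal)
      - Real.log (P (w (Fin.last n)) (xw a₀ n w))| ≤ varRate P n / δ := by
  haveI : IsProbabilityMeasure ν := hν.1
  set b := w (Fin.last n) with hb
  set c := P b (xw a₀ n w) with hc
  set q := (ν (cyl n (Fin.init w))).toReal with hqdef
  set r := (ν (cyl (n+1) w)).toReal with hrdef
  have hqpos : 0 < q := lt_of_lt_of_le (pow_pos hδ n) (cyl_pos hA hker hδ hbound hν n _)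
  have hCm_q : (ν (Cm n (Fin.init w))).toReal = q := by
    rw [hqdef, ← measure_cyl_eq_Cm hA hν.2.1]
  have hr_eq : r = ∫ ω in Cm n (Fin.init w), P b (past ω) ∂ν := by
    rw [hrdef, measure_cyl_eq_Dm hA hν.2.1, compat_Dm hA hν.2.2]
  have hmeasCm := meas_Cm hA n (Fin.init w)
  have hint : IntegrableOn (fun ω => P b (past ω)) (Cm n (Fin.init w)) ν :=
    (integrable_P_past hker ν _).integrableOn
  have hmem : ∀ ω ∈ Cm n (Fin.init w), past ω ∈ Bp n w := by
    intro ω hω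
    rw [← past_preimage_Bp] at hω
    exact hω
  have hsub : ∫ ω in Cm n (Fin.init w), (P b (past ω) - c) ∂ν = r - q * c := by
    rw [integral_sub hint (integrable_const c).integrableOn, setIntegral_const, smul_eq_mul,
      show ν.real (Cm n (Fin.init w)) = q from hCm_q, ← hr_eq]
  have hnorm : |r - q * c| ≤ varRate P n * q := by
    rw [← hsub, ← hCm_q, ← Real.norm_eq_abs]
    refine norm_setIntegral_le_of_norm_le_const (measure_lt_top ν _) ?_
    intro ω hω
    rw [Real.norm_eq_abs]
    exact abs_sub_le_varRate hker n b _ _ (xw_agree a₀ n w (hmem ω hω))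
  have hrq : δ ≤ r / q := by
    rw [le_div_iff₀ hqpos]
    have h2 : ∫ _ω in Cm n (Fin.init w), δ ∂ν ≤ ∫ ω in Cm n (Fin.init w), P b (past ω) ∂ν :=
      setIntegral_mono_on (integrable_const δ).integrableOn hint hmeasCm (fun ω _ => hbound _ _)
    rw [setIntegral_const, smul_eq_mul, show ν.real (Cm n (Fin.init w)) = q from hCm_q] at h2
    rw [← hr_eq] at h2
    linarith
  have hcδ : δ ≤ c := hbound _ _
  have hdiff : |r/q - c| ≤ varRate P n := by
    have h5 : r/q - c = (r - q * c)/q := by field_simp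
    rw [h5, abs_div, abs_of_pos hqpos, div_le_iff₀ hqpos]
    exact hnorm
  calc |Real.log (r/q) - Real.log c| ≤ |r/q - c|/δ := abs_log_sub_log_le hδ hrq hcδ
  _ ≤ varRate P n / δ := by
      rw [div_le_div_iff₀ hδ hδ]
      nlinarith [hdiff]

lemma measurable_logP (hA : ∀ s : Set A, MeasurableSet s) (hker : IsProbKernel P) :
    Measurable fun ω : ℤ → A => Real.log (P (ω 0) (past ω)) := by
  classical
  apply Real.measurable_log.comp
  have h : (fun ω : ℤ → A => P (ω 0) (past ω))
      = fun ω => ∑ a : A, if ω 0 = a then P a (past ω) else 0 := by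
    funext ω
    rw [Finset.sum_ite_eq Finset.univ (ω 0) (fun a => P a (past ω))]
    simp
  rw [h]
  apply Finset.measurable_sum
  intro a _
  have hset : MeasurableSet {ω : ℤ → A | ω 0 = a} := by
    have he : {ω : ℤ → A | ω 0 = a} = (fun ω : ℤ → A => ω 0) ⁻¹' {a} := rfl
    rw [he]; exact measurable_pi_apply 0 (hA {a})
  exact Measurable.ite hset ((hker.1 a).comp measurable_past) measurable_const

lemma integrable_logP (hA : ∀ s : Set A, MeasurableSet s) (hker : IsProbKernel P) {δ : ℝ}
    (hδ : 0 < δ) (hbound : ∀ a x, δ ≤ P a x) [IsProbabilityMeasure ν] :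
    Integrable (fun ω : ℤ → A => Real.log (P (ω 0) (past ω))) ν := by
  refine (integrable_const |Real.log δ|).mono'
    (measurable_logP hA hker).aestronglyMeasurable ?_
  filter_upwards with ω
  rw [Real.norm_eq_abs]
  exact abs_log_le hδ (hbound _ _) (P_le_one hker _ _)

lemma key_int (hA : ∀ s : Set A, MeasurableSet s) (hker : IsProbKernel P) {δ : ℝ}
    (hδ : 0 < δ) (hbound : ∀ a x, δ ≤ P a x) (hν : StatChain P ν)
    (a₀ : A) (n : ℕ) (w : Fin (n+1) → A) :
    |(∫ ω in Dm n w, Real.log (P (ω 0) (past ω)) ∂ν)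
        - (ν (Dm n w)).toReal * Real.log (P (w (Fin.last n)) (xw a₀ n w))|
      ≤ varRate P n / δ * (ν (Dm n w)).toReal := by
  haveI : IsProbabilityMeasure ν := hν.1
  set b := w (Fin.last n) with hb
  set c := Real.log (P b (xw a₀ n w)) with hc
  have hg : Integrable (fun ω : ℤ → A => Real.log (P (ω 0) (past ω))) ν :=
    integrable_logP hA hker hδ hbound
  have hsub : ∫ ω in Dm n w, (Real.log (P (ω 0) (past ω)) - c) ∂ν
      = (∫ ω in Dm n w, Real.log (P (ω 0) (past ω)) ∂ν) - (ν (Dm n w)).toReal * c := by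
    rw [integral_sub hg.integrableOn (integrable_const c).integrableOn, setIntegral_const,
      smul_eq_mul]
    rfl
  rw [← hsub, ← Real.norm_eq_abs]
  refine norm_setIntegral_le_of_norm_le_const (measure_lt_top ν _) ?_
  intro ω hω
  rw [Dm_eq] at hω
  obtain ⟨h0, hp⟩ := hω
  rw [Real.norm_eq_abs, h0, hc]
  calc |Real.log (P b (past ω)) - Real.log (P b (xw a₀ n w))|
      ≤ |P b (past ω) - P b (xw a₀ n w)|/δ :=
        abs_log_sub_log_le hδ (hbound _ _) (hbound _ _)
  _ ≤ varRate P n / δ := by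
      rw [div_le_div_iff₀ hδ hδ]
      nlinarith [abs_sub_le_varRate hker n b (past ω) (xw a₀ n w) (xw_agree a₀ n w hp)]

lemma Dm_disjoint (n : ℕ) : Pairwise (Function.onFun Disjoint (Dm (A := A) n)) := by
  intro w w' hww'
  rw [Function.onFun]
  rw [Set.disjoint_left]
  intro ω hw hw'
  apply hww'
  funext i
  rw [← hw i, ← hw' i]

lemma Dm_iUnion (n : ℕ) : (⋃ w : Fin (n+1) → A, Dm n w) = Set.univ := by
  ext ω
  simp only [Set.mem_iUnion, Set.mem_univ, iff_true]
  exact ⟨fun i => ω ((i : ℤ) - n), fun i => rfl⟩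

lemma integral_partition (hA : ∀ s : Set A, MeasurableSet s) (n : ℕ)
    {g : (ℤ → A) → ℝ} (hg : Integrable g ν) :
    ∫ ω, g ω ∂ν = ∑ w : Fin (n+1) → A, ∫ ω in Dm n w, g ω ∂ν := by
  rw [← setIntegral_univ (f := g) (μ := ν)]
  rw [← Dm_iUnion (A := A) n]
  rw [integral_iUnion (meas_Dm hA n) (Dm_disjoint n) hg.integrableOn]
  exact tsum_fintype _

lemma sum_toReal_Dm (hA : ∀ s : Set A, MeasurableSet s) [IsProbabilityMeasure ν] (n : ℕ) :
    ∑ w : Fin (n+1) → A, (ν (Dm n w)).toReal = 1 := by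
  have h := integral_partition (ν := ν) hA n (g := fun _ => (1:ℝ)) (integrable_const 1)
  simp only [setIntegral_const, smul_eq_mul, mul_one] at h
  rw [show ∑ w : Fin (n+1) → A, (ν (Dm n w)).toReal = ∑ x, ν.real (Dm n x) from rfl, ← h]
  simp

end Aux4
/-- Step of the proof of **Lemma 4** (Gallo–Takahashi): for a continuous, strongly
non-null kernel `P` and stationary compatible chains `X` (law `μ`) and `Z` (law `ρ`),
the cross conditional entropies `H_X(Z_0 | Z_{-n}^{-1})` converge to
`-E_μ[log P(X_0 | X_{-1} X_{-2} ⋯)]`; in particular the limit does not depend on `Z`. -/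
theorem statement10 (P : A → Past A → ℝ) (hker : IsProbKernel P)
    (hcont : ContinuousKernel P) (δ : ℝ) (hδ : 0 < δ) (hbound : ∀ a x, δ ≤ P a x)
    (μ ρ : Measure (ℤ → A)) (hμ : StatChain P μ) (hρ : StatChain P ρ) :
    Tendsto (fun n => crossEntropy μ ρ n) atTop
      (nhds (-∫ ω, Real.log (P (ω 0) (past ω)) ∂μ)) := by
  haveI hPμ : IsProbabilityMeasure μ := hμ.1
  haveI hPρ : IsProbabilityMeasure ρ := hρ.1
  haveI : Nonempty A := nonempty_of_prob μ
  have hA : ∀ s : Set A, MeasurableSet s := all_measurable hker hδ hbound μ hμ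
  obtain ⟨a₀⟩ := (inferInstance : Nonempty A)
  set L : ℝ := -∫ ω, Real.log (P (ω 0) (past ω)) ∂μ with hL
  have hg : Integrable (fun ω : ℤ → A => Real.log (P (ω 0) (past ω))) μ :=
    integrable_logP hA hker hδ hbound
  have key : ∀ n : ℕ, dist (crossEntropy μ ρ n) L ≤ 2/δ * varRate P n := by
    intro n
    rw [Real.dist_eq]
    set I : (Fin (n+1) → A) → ℝ :=
      fun w => ∫ ω in Dm n w, Real.log (P (ω 0) (past ω)) ∂μ with hI
    set m : (Fin (n+1) → A) → ℝ := fun w => (μ (Dm n w)).toReal with hm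
    set t : (Fin (n+1) → A) → ℝ := fun w =>
      Real.log ((ρ (cyl (n+1) w)).toReal / (ρ (cyl n (Fin.init w))).toReal) with ht
    set c : (Fin (n+1) → A) → ℝ :=
      fun w => Real.log (P (w (Fin.last n)) (xw a₀ n w)) with hc
    have hCE : crossEntropy μ ρ n = -∑ w, m w * t w := by
      simp only [crossEntropy, hm, ht]
      congr 1
      apply Finset.sum_congr rfl
      intro w _
      rw [measure_cyl_eq_Dm hA hμ.2.1]
    have hLsum : L = -∑ w, I w := by
      rw [hL, integral_partition (ν := μ) hA n hg]
    have hterm : ∀ w, |I w - m w * t w| ≤ 2/δ * varRate P n * m w := by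
      intro w
      have h1 : |I w - m w * c w| ≤ varRate P n / δ * m w :=
        key_int hA hker hδ hbound hμ a₀ n w
      have h2 : |t w - c w| ≤ varRate P n / δ :=
        key_ratio hA hker hδ hbound hρ a₀ n w
      have hm0 : 0 ≤ m w := ENNReal.toReal_nonneg
      have h3 : |m w * c w - m w * t w| ≤ m w * (varRate P n / δ) := by
        rw [← mul_sub, abs_mul, abs_of_nonneg hm0]
        refine mul_le_mul_of_nonneg_left ?_ hm0
        rw [abs_sub_comm]
        exact h2
      have heq : 2/δ * varRate P n * m w
          = varRate P n / δ * m w + m w * (varRate P n / δ) := by ring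
      calc |I w - m w * t w|
          ≤ |I w - m w * c w| + |m w * c w - m w * t w| := abs_sub_le _ _ _
      _ ≤ varRate P n / δ * m w + m w * (varRate P n / δ) := add_le_add h1 h3
      _ = 2/δ * varRate P n * m w := heq.symm
    have hsum_m : ∑ w, m w = 1 := sum_toReal_Dm (ν := μ) hA n
    have hdiff : crossEntropy μ ρ n - L = ∑ w, (I w - m w * t w) := by
      rw [hCE, hLsum, Finset.sum_sub_distrib]
      ring
    rw [hdiff]
    calc |∑ w, (I w - m w * t w)| ≤ ∑ w, |I w - m w * t w| :=
          Finset.abs_sum_le_sum_abs _ _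
    _ ≤ ∑ w, 2/δ * varRate P n * m w := Finset.sum_le_sum fun w _ => hterm w
    _ = 2/δ * varRate P n * ∑ w, m w := by rw [Finset.mul_sum]
    _ = 2/δ * varRate P n := by rw [hsum_m, mul_one]
  have h0 : Tendsto (fun n => 2/δ * varRate P n) atTop (nhds 0) := by
    have := hcont.const_mul (2/δ)
    simpa using this
  exact tendsto_iff_dist_tendsto_zero.mpr (squeeze_zero (fun n => dist_nonneg) key h0)

end GT
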